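/- Consider a Blackwell game, a strategy profile σ, a player i, and a real number c. If E_σ[f_i | h] ≥ c for every history h ∈ H, then P_σ({p ∈ A^ℕ : f_i(p) ≥ c}) = 1. -/

import Mathlib

open MeasureTheory

namespace Blackwell

/-- The set of plays: infinite streams of action profiles. -/
abbrev Play {ι : Type*} (Ac : ι → Type*) : Type _ := ℕ → ∀ j, Ac j

/-- A behavior strategy of player `i`: a mixed action after every finite history.
A history of length `t` is encoded by the first `t` coordinates of a play, and the
strategy is required to depend only on these coordinates. -/
structure Strategy {ι : Type*} (Ac : ι → Type*) (i : ι) where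
  act : ℕ → Play Ac → PMF (Ac i)
  depends_on_past : ∀ (t : ℕ) (p q : Play Ac), (∀ s, s < t → p s = q s) → act t p = act t q

/-- A strategy profile: a behavior strategy for every player. -/
abbrev Profile {ι : Type*} (Ac : ι → Type*) : Type _ := ∀ i, Strategy Ac i

/-- The assignment, to each strategy profile `σ`, of the induced (Ionescu–Tulcea)
probability measure `P_σ` on the set of plays; it is uniquely characterized by the
probabilities it assigns to cylinder sets. -/
structure PlayMeasure {ι : Type*} [Fintype ι] (Ac : ι → Type*)
    [∀ i, MeasurableSpace (Ac i)] where
  μ : Profile Ac → Measure (Play Ac)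
  isProb : ∀ σ, IsProbabilityMeasure (μ σ)
  cyl : ∀ (σ : Profile Ac) (n : ℕ) (p : Play Ac),
    μ σ {q | ∀ t, t < n → q t = p t}
      = ∏ t ∈ Finset.range n, ∏ i, ((σ i).act t p) (p t i)

variable {ι : Type*} [Fintype ι] [DecidableEq ι] [Nonempty ι]
  {Ac : ι → Type*} [∀ i, Fintype (Ac i)] [∀ i, Nonempty (Ac i)]
  [∀ i, MeasurableSpace (Ac i)] [∀ i, DiscreteMeasurableSpace (Ac i)]

/-- The expected payoff `E_σ[f]` of a strategy profile `σ` for payoff function `f`. -/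
noncomputable def expPay (PM : PlayMeasure Ac) (σ : Profile Ac) (f : Play Ac → ℝ) : ℝ :=
  ∫ p, f p ∂(PM.μ σ)

/-- Concatenation of the history given by the first `n` coordinates of `h` with the play `q`. -/
def splice (n : ℕ) (h q : Play Ac) : Play Ac := fun t => if t < n then h t else q (t - n)

/-- The continuation of a strategy in the subgame that starts at the history
given by the first `n` coordinates of `h`. -/
def Strategy.shift {i : ι} (σi : Strategy Ac i) (n : ℕ) (h : Play Ac) : Strategy Ac i where
  act t q := σi.act (n + t) (splice n h q)
  depends_on_past := by
    intro t p q hpq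
    refine σi.depends_on_past _ _ _ ?_
    intro s hs
    simp only [splice]
    by_cases hsn : s < n
    · simp [hsn]
    · simp only [if_neg hsn]
      exact hpq (s - n) (by omega)

/-- The expected payoff `E_σ[f ∣ h]` in the subgame that starts at the history
given by the first `n` coordinates of `h`. -/
noncomputable def subExp (PM : PlayMeasure Ac) (σ : Profile Ac) (f : Play Ac → ℝ)
    (n : ℕ) (h : Play Ac) : ℝ :=
  ∫ q, f (splice n h q) ∂(PM.μ (fun i => (σ i).shift n h))

/-- The minmax value of player `i`. -/
noncomputable def minmax (PM : PlayMeasure Ac) (f : Play Ac → ℝ) (i : ι) : ℝ :=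
  ⨅ τ : Profile Ac, ⨆ σi : Strategy Ac i, expPay PM (Function.update τ i σi) f

/-- The maxmin value of player `i`. -/
noncomputable def maxmin (PM : PlayMeasure Ac) (f : Play Ac → ℝ) (i : ι) : ℝ :=
  ⨆ σi : Strategy Ac i, ⨅ τ : Profile Ac, expPay PM (Function.update τ i σi) f

/-- The minmax value of player `i` in the subgame that starts at the history
given by the first `n` coordinates of `h`. -/
noncomputable def subMinmax (PM : PlayMeasure Ac) (f : Play Ac → ℝ) (i : ι)
    (n : ℕ) (h : Play Ac) : ℝ :=
  ⨅ τ : Profile Ac, ⨆ σi : Strategy Ac i, subExp PM (Function.update τ i σi) f n h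

/-- The maxmin value of player `i` in the subgame that starts at the history
given by the first `n` coordinates of `h`. -/
noncomputable def subMaxmin (PM : PlayMeasure Ac) (f : Play Ac → ℝ) (i : ι)
    (n : ℕ) (h : Play Ac) : ℝ :=
  ⨆ σi : Strategy Ac i, ⨅ τ : Profile Ac, subExp PM (Function.update τ i σi) f n h

/-- A strategy profile `σ` is an `ε`-equilibrium if no player can gain more than `ε`
by a unilateral deviation. -/
def IsEpsEquilibrium (PM : PlayMeasure Ac) (f : ι → Play Ac → ℝ) (ε : ℝ)
    (σ : Profile Ac) : Prop :=
  ∀ (i : ι) (σi : Strategy Ac i),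
    expPay PM (Function.update σ i σi) (f i) ≤ expPay PM σ (f i) + ε

/-- A payoff function is tail-measurable if changing finitely many coordinates of the
play does not change its value. -/
def TailMeasurable (f : Play Ac → ℝ) : Prop :=
  ∀ p q : Play Ac, (∃ N, ∀ t, N ≤ t → p t = q t) → f p = f q

/-- A payoff function is bounded. -/
def BddPayoff (f : Play Ac → ℝ) : Prop := ∃ C, ∀ p, |f p| ≤ C


section Aux

/-- Cylinder set determined by the first `n` coordinates of `p`. -/
def Cyl (n : ℕ) (p : Play Ac) : Set (Play Ac) := {q | ∀ t, t < n → q t = p t}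

lemma measurableSet_Cyl (n : ℕ) (p : Play Ac) : MeasurableSet (Cyl n p) := by
  have h : Cyl n p = ⋂ t ∈ Finset.range n, (fun q : Play Ac => q t) ⁻¹' {p t} := by
    ext q; simp [Cyl]
  rw [h]
  exact MeasurableSet.biInter (Finset.range n).countable_toSet
    (fun t _ => measurable_pi_apply t (measurableSet_singleton _))

lemma cyl_apply (PM : PlayMeasure Ac) (σ : Profile Ac) (n : ℕ) (p : Play Ac) :
    PM.μ σ (Cyl n p) = ∏ t ∈ Finset.range n, ∏ i, ((σ i).act t p) (p t i) :=
  PM.cyl σ n p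

def Cyls : Set (Set (Play Ac)) := {S | ∃ (n : ℕ) (p : Play Ac), S = Cyl n p}

lemma Cyl_inter_Cyl {m n : ℕ} {p h : Play Ac} (hc : ∀ t, t < min m n → p t = h t) :
    Cyl m p ∩ Cyl n h = Cyl (max m n) (fun t => if t < n then h t else p t) := by
  ext q
  simp only [Cyl, Set.mem_inter_iff, Set.mem_setOf_eq]
  constructor
  · rintro ⟨h1, h2⟩ t ht
    by_cases htn : t < n
    · simp only [if_pos htn]; exact h2 t htn
    · simp only [if_neg htn]; exact h1 t (by omega)
  · intro H
    refine ⟨fun t ht => ?_, fun t ht => ?_⟩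
    · have h3 := H t (by omega)
      by_cases htn : t < n
      · rw [if_pos htn] at h3; rw [h3, ← hc t (by omega)]
      · rwa [if_neg htn] at h3
    · have h3 := H t (by omega)
      rwa [if_pos ht] at h3

lemma isPiSystem_Cyls : IsPiSystem (Cyls (Ac := Ac)) := by
  rintro s ⟨m, p, rfl⟩ t ⟨n, h, rfl⟩ hne
  obtain ⟨q, hq1, hq2⟩ := hne
  have hc : ∀ t, t < min m n → p t = h t := by
    intro t ht
    rw [← hq1 t (by omega)]
    exact hq2 t (by omega)
  rw [Cyl_inter_Cyl hc]
  exact ⟨_, _, rfl⟩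

/-- Extend a finite history to a play, padding with arbitrary actions. -/
noncomputable def extPlay (n : ℕ) (v : Fin n → ∀ j, Ac j) : Play Ac :=
  fun t => if ht : t < n then v ⟨t, ht⟩ else fun j => Classical.arbitrary (Ac j)

lemma generateFrom_Cyls :
    (inferInstance : MeasurableSpace (Play Ac))
      = MeasurableSpace.generateFrom (Cyls (Ac := Ac)) := by
  refine le_antisymm ?_ (MeasurableSpace.generateFrom_le ?_)
  · have hev : ∀ t : ℕ, Measurable[MeasurableSpace.generateFrom (Cyls (Ac := Ac))]
        (fun q : Play Ac => q t) := by
      intro t s _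
      have h1 : (fun q : Play Ac => q t) ⁻¹' s
          = ⋃ b ∈ s, (fun q : Play Ac => q t) ⁻¹' {b} := by
        ext q; simp
      rw [h1]
      refine MeasurableSet.biUnion s.to_countable fun b _ => ?_
      have h2 : (fun q : Play Ac => q t) ⁻¹' {b}
          = ⋃ (v : Fin (t+1) → ∀ j, Ac j) (_ : v ⟨t, Nat.lt_succ_self t⟩ = b),
              Cyl (t+1) (extPlay (t+1) v) := by
        ext q
        simp only [Set.mem_preimage, Set.mem_singleton_iff, Set.mem_iUnion, Cyl,
          Set.mem_setOf_eq]
        constructor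
        · intro hq
          refine ⟨fun s => q s.1, hq, ?_⟩
          intro r hr
          simp [extPlay, hr]
        · rintro ⟨v, hv, hq⟩
          have h3 := hq t (Nat.lt_succ_self t)
          rw [h3]
          simpa [extPlay] using hv
      rw [h2]
      exact MeasurableSet.iUnion fun v => MeasurableSet.iUnion fun hv =>
        MeasurableSpace.measurableSet_generateFrom ⟨_, _, rfl⟩
    exact iSup_le fun t => measurable_iff_comap_le.mp (hev t)
  · rintro S ⟨n, p, rfl⟩
    exact measurableSet_Cyl n p

lemma measurable_splice (n : ℕ) (h : Play Ac) :
    Measurable (splice n h : Play Ac → Play Ac) := by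
  refine measurable_pi_lambda _ fun t => ?_
  by_cases ht : t < n
  · simpa [splice, ht] using (measurable_const : Measurable fun _ : Play Ac => h t)
  · simpa [splice, ht] using
      (measurable_pi_apply (t - n) : Measurable fun q : Play Ac => q (t - n))

lemma restrict_cyl (PM : PlayMeasure Ac) (σ : Profile Ac) (n : ℕ) (h : Play Ac) :
    (PM.μ σ).restrict (Cyl n h)
      = PM.μ σ (Cyl n h) • Measure.map (splice n h) (PM.μ fun j => (σ j).shift n h) := by
  haveI := PM.isProb σ
  haveI := PM.isProb (fun j => (σ j).shift n h)
  refine ext_of_generate_finite _ generateFrom_Cyls isPiSystem_Cyls ?_ ?_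
  · rintro S ⟨m, p, rfl⟩
    rw [Measure.restrict_apply (measurableSet_Cyl m p), Measure.smul_apply, smul_eq_mul,
      Measure.map_apply (measurable_splice n h) (measurableSet_Cyl m p)]
    by_cases hcase : ∀ t, t < min m n → p t = h t
    · set r : Play Ac := fun t => if t < n then h t else p t with hr
      have hint : Cyl m p ∩ Cyl n h = Cyl (max m n) r := Cyl_inter_Cyl hcase
      have hpre : splice n h ⁻¹' Cyl m p = Cyl (m - n) (fun s => p (n + s)) := by
        ext q
        simp only [Cyl, Set.mem_preimage, Set.mem_setOf_eq, splice]
        constructor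
        · intro H s hs
          have h4 := H (n + s) (by omega)
          simpa using h4
        · intro H t ht
          by_cases htn : t < n
          · rw [if_pos htn]
            exact (hcase t (by omega)).symm
          · rw [if_neg htn]
            rw [H (t - n) (by omega)]
            have h9 : n + (t - n) = t := by omega
            rw [h9]
      rw [hint, hpre, cyl_apply, cyl_apply, cyl_apply]
      have hsp : splice n h (fun s => p (n + s)) = r := by
        funext t
        by_cases htn : t < n
        · simp [splice, htn, hr]
        · simp only [splice, hr, if_neg htn]
          have h9 : n + (t - n) = t := by omega
          rw [h9]
      have hmax : max m n = n + (m - n) := by omega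
      rw [hmax, Finset.prod_range_add]
      congr 1
      · refine Finset.prod_congr rfl fun t ht => Finset.prod_congr rfl fun j _ => ?_
        rw [Finset.mem_range] at ht
        have h5 : (σ j).act t r = (σ j).act t h :=
          (σ j).depends_on_past t r h (fun s hs => by rw [hr]; exact if_pos (by omega))
        have h6 : r t = h t := by rw [hr]; exact if_pos ht
        rw [h5, h6]
      · refine Finset.prod_congr rfl fun s _ => Finset.prod_congr rfl fun j _ => ?_
        have h7 : ((σ j).shift n h).act s (fun u => p (n + u)) = (σ j).act (n + s) r := by
          show (σ j).act (n + s) (splice n h fun u => p (n + u)) = _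
          rw [hsp]
        have h8 : r (n + s) = p (n + s) := by rw [hr]; exact if_neg (by omega)
        rw [h7, h8]
    · push_neg at hcase
      obtain ⟨t, ht, hne⟩ := hcase
      have h1 : Cyl m p ∩ Cyl n h = ∅ := by
        ext q
        simp only [Cyl, Set.mem_inter_iff, Set.mem_setOf_eq, Set.mem_empty_iff_false,
          iff_false, not_and]
        intro H1 H2
        exact absurd ((H1 t (by omega)).symm.trans (H2 t (by omega))) hne
      have h2 : splice n h ⁻¹' Cyl m p = ∅ := by
        ext q
        simp only [Cyl, Set.mem_preimage, Set.mem_setOf_eq, Set.mem_empty_iff_false,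
          iff_false, not_forall]
        refine ⟨t, by omega, ?_⟩
        intro H
        simp only [splice, if_pos (show t < n by omega)] at H
        exact hne H.symm
      rw [h1, h2]
      simp
  · have hmap : Measure.map (splice n h) (PM.μ fun j => (σ j).shift n h) Set.univ = 1 := by
      rw [Measure.map_apply (measurable_splice n h) MeasurableSet.univ]
      simp
    rw [Measure.restrict_apply_univ, Measure.smul_apply, hmap, smul_eq_mul, mul_one]

lemma setIntegral_cyl (PM : PlayMeasure Ac) (σ : Profile Ac) {g : Play Ac → ℝ}
    (hg : Measurable g) (n : ℕ) (h : Play Ac) :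
    ∫ p in Cyl n h, g p ∂(PM.μ σ) = (PM.μ σ (Cyl n h)).toReal * subExp PM σ g n h := by
  rw [restrict_cyl PM σ n h, integral_smul_measure,
    integral_map (measurable_splice n h).aemeasurable hg.aestronglyMeasurable, smul_eq_mul]
  rfl

lemma setIntegral_cyl_sub_nonneg (PM : PlayMeasure Ac) (σ : Profile Ac) {g : Play Ac → ℝ}
    (hg : Measurable g) (hb : ∃ C, ∀ p, |g p| ≤ C) {c : ℝ}
    (hc : ∀ (n : ℕ) (h : Play Ac), c ≤ subExp PM σ g n h) (n : ℕ) (h : Play Ac) :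
    0 ≤ ∫ p in Cyl n h, (g p - c) ∂(PM.μ σ) := by
  haveI := PM.isProb σ
  obtain ⟨C, hC⟩ := hb
  have hint : Integrable g (PM.μ σ) :=
    ⟨hg.aestronglyMeasurable, HasFiniteIntegral.of_bounded (C := C)
      (Filter.Eventually.of_forall fun p => by simpa using hC p)⟩
  rw [integral_sub hint.integrableOn (integrableOn_const (measure_ne_top _ _)),
    setIntegral_cyl PM σ hg n h, setIntegral_const, smul_eq_mul, measureReal_def]
  have h1 := hc n h
  have h2 : (0:ℝ) ≤ (PM.μ σ (Cyl n h)).toReal := ENNReal.toReal_nonneg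
  nlinarith

/-- Sets determined by finitely many coordinates. -/
def FinDet : Set (Set (Play Ac)) :=
  {S | ∃ n : ℕ, ∀ p q : Play Ac, (∀ t, t < n → p t = q t) → (p ∈ S ↔ q ∈ S)}

lemma isSetAlgebra_FinDet : IsSetAlgebra (FinDet (Ac := Ac)) where
  empty_mem := ⟨0, fun _ _ _ => Iff.rfl⟩
  compl_mem := by
    rintro S ⟨n, hn⟩
    exact ⟨n, fun p q hpq => not_congr (hn p q hpq)⟩
  union_mem := by
    rintro S T ⟨n, hn⟩ ⟨m, hm⟩
    exact ⟨max n m, fun p q hpq =>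
      or_congr (hn p q fun t ht => hpq t (by omega)) (hm p q fun t ht => hpq t (by omega))⟩

lemma Cyls_subset_FinDet : Cyls (Ac := Ac) ⊆ FinDet (Ac := Ac) := by
  rintro S ⟨n, p, rfl⟩
  refine ⟨n, fun a b hab => ?_⟩
  simp only [Cyl, Set.mem_setOf_eq]
  exact forall₂_congr fun t ht => by rw [hab t ht]

lemma FinDet_rep {S : Set (Play Ac)} (hS : S ∈ FinDet (Ac := Ac)) :
    ∃ (n : ℕ) (V : Finset (Fin n → ∀ j, Ac j)),
      S = ⋃ v ∈ V, Cyl n (extPlay n v) := by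
  classical
  obtain ⟨n, hn⟩ := hS
  refine ⟨n, Finset.univ.filter fun v => extPlay n v ∈ S, ?_⟩
  ext q
  simp only [Set.mem_iUnion, Finset.mem_filter, Finset.mem_univ, true_and, exists_prop, Cyl,
    Set.mem_setOf_eq]
  constructor
  · intro hq
    refine ⟨fun t => q t.1, ?_, ?_⟩
    · exact (hn _ q fun t ht => by simp [extPlay, ht]).mpr hq
    · intro t ht
      simp [extPlay, ht]
  · rintro ⟨v, hv, hq⟩
    exact (hn _ q fun t ht => (hq t ht).symm).mp hv

lemma measurableSet_of_FinDet {S : Set (Play Ac)} (hS : S ∈ FinDet (Ac := Ac)) :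
    MeasurableSet S := by
  obtain ⟨n, V, rfl⟩ := FinDet_rep hS
  exact V.measurableSet_biUnion fun v _ => measurableSet_Cyl n (extPlay n v)

lemma generateFrom_FinDet :
    (inferInstance : MeasurableSpace (Play Ac))
      = MeasurableSpace.generateFrom (FinDet (Ac := Ac)) := by
  refine le_antisymm ?_ (MeasurableSpace.generateFrom_le fun S hS => measurableSet_of_FinDet hS)
  exact generateFrom_Cyls.le.trans (MeasurableSpace.generateFrom_mono Cyls_subset_FinDet)

lemma setIntegral_FinDet_sub_nonneg (PM : PlayMeasure Ac) (σ : Profile Ac) {g : Play Ac → ℝ}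
    (hg : Measurable g) (hb : ∃ C, ∀ p, |g p| ≤ C) {c : ℝ}
    (hc : ∀ (n : ℕ) (h : Play Ac), c ≤ subExp PM σ g n h)
    {S : Set (Play Ac)} (hS : S ∈ FinDet (Ac := Ac)) :
    0 ≤ ∫ p in S, (g p - c) ∂(PM.μ σ) := by
  haveI := PM.isProb σ
  obtain ⟨n, V, rfl⟩ := FinDet_rep hS
  obtain ⟨C, hC⟩ := hb
  have hint : Integrable (fun p => g p - c) (PM.μ σ) := by
    refine Integrable.sub ?_ (integrable_const c)
    exact ⟨hg.aestronglyMeasurable, HasFiniteIntegral.of_bounded (C := C)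
      (Filter.Eventually.of_forall fun p => by simpa using hC p)⟩
  have hdisj : Set.Pairwise (↑V : Set (Fin n → ∀ j, Ac j))
      (Function.onFun Disjoint fun v : Fin n → ∀ j, Ac j => Cyl n (extPlay n v)) := by
    intro v _ w _ hvw
    rw [Function.onFun, Set.disjoint_left]
    intro q hqv hqw
    simp only [Cyl, Set.mem_setOf_eq] at hqv hqw
    apply hvw
    funext s
    have hv' : extPlay n v s.1 = v s := by simp [extPlay, s.2]
    have hw' : extPlay n w s.1 = w s := by simp [extPlay, s.2]
    calc v s = extPlay n v s.1 := hv'.symm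
      _ = q s.1 := (hqv s.1 s.2).symm
      _ = extPlay n w s.1 := hqw s.1 s.2
      _ = w s := hw'
  rw [integral_biUnion_finset V (fun v _ => measurableSet_Cyl n (extPlay n v)) hdisj
    (fun v _ => hint.integrableOn)]
  exact Finset.sum_nonneg fun v _ => setIntegral_cyl_sub_nonneg PM σ hg ⟨C, hC⟩ hc n (extPlay n v)

end Aux

/-- Lévy's zero-one law application: if in every subgame the expected
payoff of player `i` under `σ` is at least `c`, then `P_σ(f_i ≥ c) = 1`. -/
theorem payoff_ge_of_subgame_payoff_ge (PM : PlayMeasure Ac) (f : ι → Play Ac → ℝ)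
    (hbdd : ∀ j, BddPayoff (f j)) (hmeas : ∀ j, Measurable (f j))
    (σ : Profile Ac) (i : ι) (c : ℝ)
    (hc : ∀ (n : ℕ) (h : Play Ac), c ≤ subExp PM σ (f i) n h) :
    PM.μ σ {p : Play Ac | c ≤ f i p} = 1 := by
  classical
  haveI := PM.isProb σ
  obtain ⟨C, hC⟩ := hbdd i
  have hC0 : (0:ℝ) ≤ C := le_trans (abs_nonneg _) (hC fun _ j => Classical.arbitrary (Ac j))
  have hint : Integrable (f i) (PM.μ σ) :=
    ⟨(hmeas i).aestronglyMeasurable, HasFiniteIntegral.of_bounded (C := C)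
      (Filter.Eventually.of_forall fun p => by simpa using hC p)⟩
  have hgint : Integrable (fun p => f i p - c) (PM.μ σ) := hint.sub (integrable_const c)
  have hgb : ∀ p, |f i p - c| ≤ C + |c| := by
    intro p
    rw [sub_eq_add_neg]
    refine (abs_add_le _ _).trans ?_
    rw [abs_neg]
    exact add_le_add (hC p) le_rfl
  have hMD : (PM.μ σ).MeasureDense (FinDet (Ac := Ac)) :=
    Measure.MeasureDense.of_generateFrom_isSetAlgebra_finite (PM.μ σ) isSetAlgebra_FinDet
      generateFrom_FinDet
  have hkey : ∀ A : Set (Play Ac), MeasurableSet A →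
      |∫ p in A, (f i p - c) ∂PM.μ σ| ≤ (C + |c|) * (PM.μ σ A).toReal := by
    intro A hA
    have h := norm_setIntegral_le_of_norm_le_const (μ := PM.μ σ) (s := A) (C := C + |c|) (f := fun p => f i p - c)
      (measure_lt_top _ _) (fun p _ => by simpa using hgb p)
    simpa [measureReal_def] using h
  have hnull : ∀ ε : ℝ, 0 < ε → PM.μ σ {p : Play Ac | f i p ≤ c - ε} = 0 := by
    intro ε hε
    set S := {p : Play Ac | f i p ≤ c - ε} with hSdef
    have hSm : MeasurableSet S := measurableSet_le (hmeas i) measurable_const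
    by_contra hS0
    have hpos : 0 < (PM.μ σ S).toReal := ENNReal.toReal_pos hS0 (measure_ne_top _ _)
    set M := (PM.μ σ S).toReal with hM
    set K := C + |c| with hK
    have hK0 : (0:ℝ) ≤ K := by positivity
    set δ := ε * M / (2 * (K + 1)) with hδ
    have hδ0 : 0 < δ := by positivity
    have hδeq : δ * (2 * (K + 1)) = ε * M := by
      rw [hδ]; field_simp
    obtain ⟨T, hT, hTd⟩ := hMD.approx S hSm (measure_ne_top _ _) δ hδ0
    have hTm : MeasurableSet T := measurableSet_of_FinDet hT
    have hT0 : 0 ≤ ∫ p in T, (f i p - c) ∂PM.μ σ :=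
      setIntegral_FinDet_sub_nonneg PM σ (hmeas i) ⟨C, hC⟩ hc hT
    have hs1 : ∫ p in S ∩ T, (f i p - c) ∂PM.μ σ + ∫ p in S \ T, (f i p - c) ∂PM.μ σ
        = ∫ p in S, (f i p - c) ∂PM.μ σ := integral_inter_add_diff hTm hgint.integrableOn
    have hs2 : ∫ p in S ∩ T, (f i p - c) ∂PM.μ σ + ∫ p in T \ S, (f i p - c) ∂PM.μ σ
        = ∫ p in T, (f i p - c) ∂PM.μ σ := by
      rw [Set.inter_comm]
      exact integral_inter_add_diff hSm hgint.integrableOn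
    have hsd1 : PM.μ σ (S \ T) ≤ ENNReal.ofReal δ := by
      refine le_trans (measure_mono ?_) hTd.le
      rw [Set.symmDiff_def]
      exact Set.subset_union_left
    have hsd2 : PM.μ σ (T \ S) ≤ ENNReal.ofReal δ := by
      refine le_trans (measure_mono ?_) hTd.le
      rw [Set.symmDiff_def]
      exact Set.subset_union_right
    have ht1 : (PM.μ σ (S \ T)).toReal ≤ δ := by
      have h := ENNReal.toReal_mono ENNReal.ofReal_ne_top hsd1
      rwa [ENNReal.toReal_ofReal hδ0.le] at h
    have ht2 : (PM.μ σ (T \ S)).toReal ≤ δ := by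
      have h := ENNReal.toReal_mono ENNReal.ofReal_ne_top hsd2
      rwa [ENNReal.toReal_ofReal hδ0.le] at h
    have hup : ∫ p in S, (f i p - c) ∂PM.μ σ ≤ -ε * M := by
      have hm : ∫ p in S, (f i p - c) ∂PM.μ σ ≤ ∫ _ in S, (-ε) ∂PM.μ σ := by
        refine setIntegral_mono_on hgint.integrableOn
          (integrableOn_const (measure_ne_top _ _)) hSm ?_
        intro p hp
        have hp' : f i p ≤ c - ε := hp
        linarith
      rw [setIntegral_const, smul_eq_mul, measureReal_def, ← hM] at hm
      linarith
    have hb1 := abs_le.mp (hkey (S \ T) (hSm.diff hTm))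
    have hb2 := abs_le.mp (hkey (T \ S) (hTm.diff hSm))
    have hmul1 : K * (PM.μ σ (S \ T)).toReal ≤ K * δ := mul_le_mul_of_nonneg_left ht1 hK0
    have hmul2 : K * (PM.μ σ (T \ S)).toReal ≤ K * δ := mul_le_mul_of_nonneg_left ht2 hK0
    nlinarith [hb1.1, hb1.2, hb2.1, hb2.2, hs1, hs2, hT0, hup, hmul1, hmul2, hδeq, hδ0, hpos, hε]
  have hlt : PM.μ σ {p : Play Ac | f i p < c} = 0 := by
    have hU : {p : Play Ac | f i p < c} = ⋃ k : ℕ, {p : Play Ac | f i p ≤ c - 1 / (k + 1)} := by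
      ext p
      simp only [Set.mem_setOf_eq, Set.mem_iUnion]
      constructor
      · intro hp
        obtain ⟨k, hk⟩ := exists_nat_one_div_lt (show (0:ℝ) < c - f i p by linarith)
        exact ⟨k, by linarith⟩
      · rintro ⟨k, hk⟩
        have h0 : (0:ℝ) < 1 / ((k:ℝ) + 1) := by positivity
        linarith
    rw [hU]
    exact measure_iUnion_null fun k => hnull (1 / ((k:ℝ) + 1)) (by positivity)
  have hcompl : {p : Play Ac | c ≤ f i p} = {p : Play Ac | f i p < c}ᶜ := by
    ext p; simp [not_lt]
  rw [hcompl, measure_compl (measurableSet_lt (hmeas i) measurable_const)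
    (measure_ne_top _ _), hlt, measure_univ]
  simp


end Blackwell
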